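/- ∫ x dP(x) = 4/7 and ∫ x² dP(x) − (4/7)² = 288/3577; that is, a random variable X with distribution P has expectation E(X) = 4/7 and variance V(X) = 288/3577. -/

import Mathlib

open MeasureTheory

noncomputable section

/-- The contractive similarity `S j x = x / 2^(j+1) + 1 - 1/2^(j-1)` (used for `j ≥ 1`). -/
def S (j : ℕ) (x : ℝ) : ℝ := x / 2 ^ (j + 1) + 1 - 1 / 2 ^ (j - 1)

/-- The similarity ratio `s j = 1/2^(j+1)`. -/
def s (j : ℕ) : ℝ := 1 / 2 ^ (j + 1)

/-- The probability vector: `p 1 = 1/4`, `p j = 3/2^(j+1)` for `j ≥ 2`. -/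
def p (j : ℕ) : ℝ := if j = 1 then 1 / 4 else 3 / 2 ^ (j + 1)

/-- `Sw ω = S_{ω_1} ∘ ⋯ ∘ S_{ω_k}`. -/
def Sw (ω : List ℕ) : ℝ → ℝ := ω.foldr (fun j f => S j ∘ f) id

/-- `pw ω = p_{ω_1} ⋯ p_{ω_k}`. -/
def pw (ω : List ℕ) : ℝ := (ω.map p).prod

/-- `sw ω = s_{ω_1} ⋯ s_{ω_k}`. -/
def sw (ω : List ℕ) : ℝ := (ω.map s).prod

/-- The basic interval `J_ω = S_ω([0,1])`. -/
def Jw (ω : List ℕ) : Set ℝ := Sw ω '' Set.Icc 0 1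

/-- The last letter of a word (junk value `0` for the empty word). -/
def wlast (ω : List ℕ) : ℕ := ω.getLastD 0

/-- `wext ω j = ω^-(ω_k + j)`: the word `ω` with its last letter increased by `j`. -/
def wext (ω : List ℕ) (j : ℕ) : List ℕ := ω.dropLast ++ [wlast ω + j]

/-- `J_{(ω,∞)} = ⋃_{j=1}^∞ J_{ω^-(ω_k+j)}`. -/
def Jinf (ω : List ℕ) : Set ℝ := ⋃ j : ℕ, Jw (wext ω (j + 1))

/-- `a(ω) = S_ω(4/7)`. -/
def aw (ω : List ℕ) : ℝ := Sw ω (4 / 7)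

/-- `a(ω,∞) = S_{ω^-(ω_k+1)}(4/7) + (8/7) s_{ω^-(ω_k+1)}`. -/
def ainf (ω : List ℕ) : ℝ := Sw (wext ω 1) (4 / 7) + (8 / 7) * sw (wext ω 1)

/-- A (nonempty) word over the alphabet `{1, 2, 3, …}`. -/
def IsWord (ω : List ℕ) : Prop := ω ≠ [] ∧ ∀ i ∈ ω, 1 ≤ i

/-- The invariance relation `P(A) = ∑_{j=1}^∞ p_j P(S_j⁻¹ A)`. -/
def Invariant (P : Measure ℝ) : Prop :=
  ∀ A : Set ℝ, MeasurableSet A →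
    P A = ∑' j : ℕ, ENNReal.ofReal (p (j + 1)) * P (S (j + 1) ⁻¹' A)

/-- The distortion error `∫ min_{a ∈ α} (x-a)² dP` of a set `α ⊆ ℝ`. -/
def distortion (P : Measure ℝ) (α : Set ℝ) : ℝ :=
  ∫ x, (⨅ a : α, (x - (a : ℝ)) ^ 2) ∂P

/-- The `n`-th quantization error for `P`. -/
def quantErr (P : Measure ℝ) (n : ℕ) : ℝ :=
  sInf {r : ℝ | ∃ α : Set ℝ, 1 ≤ α.ncard ∧ α.ncard ≤ n ∧ r = distortion P α}

/-- `α` is an optimal set of `n`-means for `P`. -/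
def IsOptimal (P : Measure ℝ) (n : ℕ) (α : Set ℝ) : Prop :=
  1 ≤ α.ncard ∧ α.ncard ≤ n ∧ distortion P α = quantErr P n

/-- `E(a(ω)) = ∫_{J_ω} (x - a(ω))² dP`. -/
def Ea (P : Measure ℝ) (ω : List ℕ) : ℝ := ∫ x in Jw ω, (x - aw ω) ^ 2 ∂P

/-- `E(a(ω,∞)) = ∫_{J_{(ω,∞)}} (x - a(ω,∞))² dP`. -/
def Eainf (P : Measure ℝ) (ω : List ℕ) : ℝ := ∫ x in Jinf ω, (x - ainf ω) ^ 2 ∂P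

/-- The Voronoi region `M(a|α)`. -/
def voronoi (α : Set ℝ) (a : ℝ) : Set ℝ := {x : ℝ | ∀ b ∈ α, |x - a| ≤ |x - b|}

lemma p_nonneg (j : ℕ) : 0 ≤ p j := by unfold p; split <;> positivity

lemma measurable_S (j : ℕ) : Measurable (S j) := by unfold S; fun_prop

lemma P_eq (P : Measure ℝ) (hinv : Invariant P) :
    P = Measure.sum (fun j => ENNReal.ofReal (p (j+1)) • P.map (S (j+1))) := by
  ext A hA
  rw [Measure.sum_apply _ hA, hinv A hA]
  refine tsum_congr fun j => ?_
  rw [Measure.smul_apply, Measure.map_apply (measurable_S _) hA, smul_eq_mul]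

lemma integral_invariant (P : Measure ℝ) (hinv : Invariant P) {f : ℝ → ℝ}
    (hfm : Measurable f) (hfi : Integrable f P) :
    ∫ x, f x ∂P = ∑' j : ℕ, p (j+1) * ∫ x, f (S (j+1) x) ∂P := by
  have hP := P_eq P hinv
  have hfi' : Integrable f (Measure.sum fun j => ENNReal.ofReal (p (j+1)) • P.map (S (j+1))) := by
    rwa [← hP]
  calc ∫ x, f x ∂P
      = ∫ x, f x ∂(Measure.sum fun j => ENNReal.ofReal (p (j+1)) • P.map (S (j+1))) := by
        rw [← hP]
    _ = ∑' j, ∫ x, f x ∂(ENNReal.ofReal (p (j+1)) • P.map (S (j+1))) := integral_sum_measure hfi'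
    _ = ∑' j : ℕ, p (j+1) * ∫ x, f (S (j+1) x) ∂P := by
        refine tsum_congr fun j => ?_
        rw [integral_smul_measure,
          integral_map (measurable_S _).aemeasurable hfm.aestronglyMeasurable,
          ENNReal.toReal_ofReal (p_nonneg _), smul_eq_mul]

/-- `E(X) = 4/7` and `V(X) = E(X²) - E(X)² = 288/3577` for `X ~ P`. -/
theorem stmt_1 (P : Measure ℝ) [IsProbabilityMeasure P]
    (hsupp : P (Set.Icc 0 1) = 1) (hinv : Invariant P) :
    (∫ x, x ∂P = 4 / 7) ∧ (∫ x, x ^ 2 ∂P - (4 / 7) ^ 2 = 288 / 3577) := by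
  -- a.e. bound and integrability
  have hae : ∀ᵐ x ∂P, x ∈ Set.Icc (0:ℝ) 1 := by
    rw [ae_iff]
    have h : {x : ℝ | ¬ x ∈ Set.Icc (0:ℝ) 1} = (Set.Icc (0:ℝ) 1)ᶜ := rfl
    rw [h, prob_compl_eq_zero_iff measurableSet_Icc]; exact hsupp
  have hid : Integrable (fun x : ℝ => x) P := by
    refine (integrable_const (1:ℝ)).mono' measurable_id.aestronglyMeasurable ?_
    filter_upwards [hae] with x hx
    rw [Real.norm_eq_abs, abs_le]
    exact ⟨by linarith [hx.1], hx.2⟩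
  have hsq : Integrable (fun x : ℝ => x ^ 2) P := by
    refine (integrable_const (1:ℝ)).mono' (by fun_prop) ?_
    filter_upwards [hae] with x hx
    rw [Real.norm_eq_abs, abs_le]
    constructor <;> nlinarith [hx.1, hx.2]
  -- geometric summability
  have hg2 : Summable (fun j : ℕ => (1/2:ℝ)^j) :=
    summable_geometric_of_lt_one (by norm_num) (by norm_num)
  have hg4 : Summable (fun j : ℕ => (1/4:ℝ)^j) :=
    summable_geometric_of_lt_one (by norm_num) (by norm_num)
  have hg8 : Summable (fun j : ℕ => (1/8:ℝ)^j) :=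
    summable_geometric_of_lt_one (by norm_num) (by norm_num)
  -- power conversions
  have h2 : ∀ j : ℕ, ((1:ℝ)/2)^j = ((2:ℝ)^j)⁻¹ := fun j => by rw [one_div, inv_pow]
  have h4 : ∀ j : ℕ, ((1:ℝ)/4)^j = ((2:ℝ)^j)⁻¹ * ((2:ℝ)^j)⁻¹ := fun j => by
    rw [show (1/4:ℝ) = (1/2)*(1/2) by norm_num, mul_pow, h2]
  have h8 : ∀ j : ℕ, ((1:ℝ)/8)^j = ((2:ℝ)^j)⁻¹ * (((2:ℝ)^j)⁻¹ * ((2:ℝ)^j)⁻¹) := fun j => by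
    rw [show (1/8:ℝ) = (1/2)*((1/2)*(1/2)) by norm_num, mul_pow, mul_pow, h2]
  -- FIRST MOMENT
  set m := ∫ x, x ∂P with hm
  have hSfun : ∀ j : ℕ, (fun x : ℝ => S (j+1) x)
      = fun x : ℝ => ((2:ℝ)^(j+2))⁻¹ * x + (1 - ((2:ℝ)^j)⁻¹) := by
    intro j; funext x; simp only [S, Nat.add_sub_cancel]; ring
  have hI1 : ∀ j : ℕ, ∫ x, S (j+1) x ∂P = ((2:ℝ)^(j+2))⁻¹ * m + (1 - ((2:ℝ)^j)⁻¹) := by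
    intro j
    rw [hSfun j, integral_add (hid.const_mul _) (integrable_const _), integral_const_mul,
      integral_const, probReal_univ, one_smul]
  have h1 : m = ∑' j : ℕ, p (j+1) * (((2:ℝ)^(j+2))⁻¹ * m + (1 - ((2:ℝ)^j)⁻¹)) := by
    calc m = ∑' j : ℕ, p (j+1) * ∫ x, S (j+1) x ∂P :=
          integral_invariant P hinv measurable_id' hid
      _ = _ := tsum_congr fun j => by rw [hI1 j]
  have hshift1 : ∀ j : ℕ, p (j+1+1) * (((2:ℝ)^(j+1+2))⁻¹ * m + (1 - ((2:ℝ)^(j+1))⁻¹))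
      = (3*m/64 - 3/16) * (1/4:ℝ)^j + (3/8) * (1/2:ℝ)^j := by
    intro j
    have hp : p (j+1+1) = 3 / 2^(j+1+1+1) := by unfold p; rw [if_neg (by omega)]
    have hne : ((2:ℝ)^j) ≠ 0 := by positivity
    rw [hp]
    simp only [h2, h4, pow_add]
    field_simp
    ring
  have hF1 : Summable (fun j : ℕ =>
      p (j+1+1) * (((2:ℝ)^(j+1+2))⁻¹ * m + (1 - ((2:ℝ)^(j+1))⁻¹))) := by
    have : (fun j : ℕ => p (j+1+1) * (((2:ℝ)^(j+1+2))⁻¹ * m + (1 - ((2:ℝ)^(j+1))⁻¹)))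
        = fun j : ℕ => (3*m/64 - 3/16) * (1/4:ℝ)^j + (3/8) * (1/2:ℝ)^j := funext hshift1
    rw [this]
    exact (hg4.mul_left _).add (hg2.mul_left _)
  have hF : Summable (fun j : ℕ => p (j+1) * (((2:ℝ)^(j+2))⁻¹ * m + (1 - ((2:ℝ)^j)⁻¹))) :=
    (summable_nat_add_iff (f := fun j : ℕ =>
      p (j+1) * (((2:ℝ)^(j+2))⁻¹ * m + (1 - ((2:ℝ)^j)⁻¹))) 1).mp hF1
  have htsum1 : ∑' j : ℕ, p (j+1) * (((2:ℝ)^(j+2))⁻¹ * m + (1 - ((2:ℝ)^j)⁻¹))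
      = m/8 + 1/2 := by
    rw [Summable.tsum_eq_zero_add hF]
    have e0 : p (0+1) * (((2:ℝ)^(0+2))⁻¹ * m + (1 - ((2:ℝ)^(0:ℕ))⁻¹)) = m/16 := by
      norm_num [p]; ring
    rw [e0]
    have e1 : ∑' j : ℕ, p (j+1+1) * (((2:ℝ)^(j+1+2))⁻¹ * m + (1 - ((2:ℝ)^(j+1))⁻¹))
        = ∑' j : ℕ, ((3*m/64 - 3/16) * (1/4:ℝ)^j + (3/8) * (1/2:ℝ)^j) :=
      tsum_congr fun j => hshift1 j
    rw [e1, Summable.tsum_add (hg4.mul_left _) (hg2.mul_left _), tsum_mul_left, tsum_mul_left,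
      tsum_geometric_of_lt_one (by norm_num) (by norm_num),
      tsum_geometric_of_lt_one (by norm_num) (by norm_num)]
    norm_num
    ring
  have hm47 : m = 4/7 := by
    rw [htsum1] at h1; linarith
  refine ⟨hm47, ?_⟩
  -- SECOND MOMENT
  set M := ∫ x, x^2 ∂P with hM
  have hSq : ∀ j : ℕ, (fun x : ℝ => (S (j+1) x)^2)
      = fun x : ℝ => (((2:ℝ)^(j+2))⁻¹)^2 * x^2
        + (2*((2:ℝ)^(j+2))⁻¹*(1 - ((2:ℝ)^j)⁻¹)) * x + (1 - ((2:ℝ)^j)⁻¹)^2 := by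
    intro j; funext x; simp only [S, Nat.add_sub_cancel]; ring
  have hI2 : ∀ j : ℕ, ∫ x, (S (j+1) x)^2 ∂P
      = (((2:ℝ)^(j+2))⁻¹)^2 * M + (2*((2:ℝ)^(j+2))⁻¹*(1 - ((2:ℝ)^j)⁻¹)) * (4/7)
        + (1 - ((2:ℝ)^j)⁻¹)^2 := by
    intro j
    have hint : Integrable (fun x : ℝ => (((2:ℝ)^(j+2))⁻¹)^2 * x^2
        + (2*((2:ℝ)^(j+2))⁻¹*(1 - ((2:ℝ)^j)⁻¹)) * x) P :=
      (hsq.const_mul _).add (hid.const_mul _)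
    rw [hSq j, integral_add hint (integrable_const _),
      integral_add (hsq.const_mul _) (hid.const_mul _), integral_const_mul, integral_const_mul,
      integral_const, probReal_univ, one_smul, ← hm, hm47]
  have h2nd : M = ∑' j : ℕ, p (j+1) * ((((2:ℝ)^(j+2))⁻¹)^2 * M
      + (2*((2:ℝ)^(j+2))⁻¹*(1 - ((2:ℝ)^j)⁻¹)) * (4/7) + (1 - ((2:ℝ)^j)⁻¹)^2) := by
    calc M = ∑' j : ℕ, p (j+1) * ∫ x, (S (j+1) x)^2 ∂P :=
          integral_invariant P hinv (by fun_prop) hsq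
      _ = _ := tsum_congr fun j => by rw [hI2 j]
  have hshift2 : ∀ j : ℕ, p (j+1+1) * ((((2:ℝ)^(j+1+2))⁻¹)^2 * M
      + (2*((2:ℝ)^(j+1+2))⁻¹*(1 - ((2:ℝ)^(j+1))⁻¹)) * (4/7) + (1 - ((2:ℝ)^(j+1))⁻¹)^2)
      = (3*M/512 + 3/32 - 3/112) * (1/8:ℝ)^j + (-(9/28)) * (1/4:ℝ)^j + (3/8) * (1/2:ℝ)^j := by
    intro j
    have hp : p (j+1+1) = 3 / 2^(j+1+1+1) := by unfold p; rw [if_neg (by omega)]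
    have hne : ((2:ℝ)^j) ≠ 0 := by positivity
    rw [hp]
    simp only [h2, h4, h8, pow_add]
    field_simp
    ring
  have hG1 : Summable (fun j : ℕ => p (j+1+1) * ((((2:ℝ)^(j+1+2))⁻¹)^2 * M
      + (2*((2:ℝ)^(j+1+2))⁻¹*(1 - ((2:ℝ)^(j+1))⁻¹)) * (4/7) + (1 - ((2:ℝ)^(j+1))⁻¹)^2)) := by
    have : (fun j : ℕ => p (j+1+1) * ((((2:ℝ)^(j+1+2))⁻¹)^2 * M
        + (2*((2:ℝ)^(j+1+2))⁻¹*(1 - ((2:ℝ)^(j+1))⁻¹)) * (4/7) + (1 - ((2:ℝ)^(j+1))⁻¹)^2))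
        = fun j : ℕ => (3*M/512 + 3/32 - 3/112) * (1/8:ℝ)^j + (-(9/28)) * (1/4:ℝ)^j
          + (3/8) * (1/2:ℝ)^j := funext hshift2
    rw [this]
    exact ((hg8.mul_left _).add (hg4.mul_left _)).add (hg2.mul_left _)
  have hG : Summable (fun j : ℕ => p (j+1) * ((((2:ℝ)^(j+2))⁻¹)^2 * M
      + (2*((2:ℝ)^(j+2))⁻¹*(1 - ((2:ℝ)^j)⁻¹)) * (4/7) + (1 - ((2:ℝ)^j)⁻¹)^2)) :=
    (summable_nat_add_iff (f := fun j : ℕ => p (j+1) * ((((2:ℝ)^(j+2))⁻¹)^2 * M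
      + (2*((2:ℝ)^(j+2))⁻¹*(1 - ((2:ℝ)^j)⁻¹)) * (4/7) + (1 - ((2:ℝ)^j)⁻¹)^2)) 1).mp hG1
  have htsum2 : ∑' j : ℕ, p (j+1) * ((((2:ℝ)^(j+2))⁻¹)^2 * M
      + (2*((2:ℝ)^(j+2))⁻¹*(1 - ((2:ℝ)^j)⁻¹)) * (4/7) + (1 - ((2:ℝ)^j)⁻¹)^2)
      = 5*M/224 + 39/98 := by
    rw [Summable.tsum_eq_zero_add hG]
    have e0 : p (0+1) * ((((2:ℝ)^(0+2))⁻¹)^2 * M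
        + (2*((2:ℝ)^(0+2))⁻¹*(1 - ((2:ℝ)^(0:ℕ))⁻¹)) * (4/7) + (1 - ((2:ℝ)^(0:ℕ))⁻¹)^2)
        = M/64 := by norm_num [p]; ring
    rw [e0]
    have e1 : ∑' j : ℕ, p (j+1+1) * ((((2:ℝ)^(j+1+2))⁻¹)^2 * M
        + (2*((2:ℝ)^(j+1+2))⁻¹*(1 - ((2:ℝ)^(j+1))⁻¹)) * (4/7) + (1 - ((2:ℝ)^(j+1))⁻¹)^2)
        = ∑' j : ℕ, ((3*M/512 + 3/32 - 3/112) * (1/8:ℝ)^j + (-(9/28)) * (1/4:ℝ)^j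
          + (3/8) * (1/2:ℝ)^j) := tsum_congr fun j => hshift2 j
    rw [e1, Summable.tsum_add ((hg8.mul_left _).add (hg4.mul_left _)) (hg2.mul_left _),
      Summable.tsum_add (hg8.mul_left _) (hg4.mul_left _), tsum_mul_left, tsum_mul_left, tsum_mul_left,
      tsum_geometric_of_lt_one (by norm_num) (by norm_num),
      tsum_geometric_of_lt_one (by norm_num) (by norm_num),
      tsum_geometric_of_lt_one (by norm_num) (by norm_num)]
    norm_num
    ring
  have hM208 : M = 208/511 := by
    rw [htsum2] at h2nd; linarith
  rw [hM208]
  norm_num
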